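/- Let u₀ : ℝ → ℝ be continuous, strictly positive, and periodic with period 1, let J₀ be a real constant, and let r : ℝ × [0,∞) → ℝ be such that r(·,t) is twice continuously differentiable, r(x,·) is continuously differentiable, all partial derivatives ∂ₜr, ∂ₓr, ∂ₓₓr are jointly continuous, r(x+1,t) = r(x,t) for all x and t, and u₀(x)·∂ₜr(x,t) = ∂ₓ(−J₀·r(x,t) + u₀(x)·∂ₓr(x,t)) for all x and t. Then for every t ≥ 0, d/dt ∫₀¹ u₀(x)·r(x,t)² dx = −2 ∫₀¹ u₀(x)·(∂ₓr(x,t))² dx ≤ 0; in particular the function t ↦ ∫₀¹ u₀(x)·r(x,t)² dx is non-increasing. -/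

import Mathlib

open MeasureTheory intervalIntegral Set

/-- Lyapunov-function computation. If `u₀` is continuous, positive and
1-periodic, `r(·,t)` is C², `r(x,·)` is C¹ on `[0,∞)`, the partial derivatives
`∂ₜr`, `∂ₓr`, `∂ₓₓr` are jointly continuous, `r` is 1-periodic in `x`, and
`u₀(x)·∂ₜr(x,t) = ∂ₓ(−J₀·r(x,t) + u₀(x)·∂ₓr(x,t))`, then for every `t ≥ 0`,
`d/dt ∫₀¹ u₀·r² dx = −2·∫₀¹ u₀·(∂ₓr)² dx ≤ 0`; in particular
`t ↦ ∫₀¹ u₀·r² dx` is non-increasing on `[0,∞)`. -/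
theorem stmt_5 (u0 : ℝ → ℝ) (hu0c : Continuous u0) (hu0pos : ∀ x, 0 < u0 x)
    (hu0per : ∀ x, u0 (x + 1) = u0 x) (J0 : ℝ) (r : ℝ → ℝ → ℝ)
    (hrx : ∀ t, 0 ≤ t → ContDiff ℝ 2 (fun x => r x t))
    (hrt : ∀ x, ContDiffOn ℝ 1 (r x) (Set.Ici 0))
    (hdt_cont : ContinuousOn (fun p : ℝ × ℝ => derivWithin (r p.1) (Set.Ici 0) p.2)
      {p : ℝ × ℝ | 0 ≤ p.2})
    (hdx_cont : ContinuousOn (fun p : ℝ × ℝ => deriv (fun y => r y p.2) p.1)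
      {p : ℝ × ℝ | 0 ≤ p.2})
    (hdxx_cont : ContinuousOn
      (fun p : ℝ × ℝ => deriv (deriv (fun y => r y p.2)) p.1) {p : ℝ × ℝ | 0 ≤ p.2})
    (hper : ∀ x t, 0 ≤ t → r (x + 1) t = r x t)
    (hpde : ∀ x t, 0 ≤ t → HasDerivAt
      (fun y => -J0 * r y t + u0 y * deriv (fun z => r z t) y)
      (u0 x * derivWithin (r x) (Set.Ici 0) t) x) :
    (∀ t, 0 ≤ t →
      HasDerivWithinAt (fun τ => ∫ x in (0:ℝ)..1, u0 x * (r x τ) ^ 2)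
        (-2 * ∫ x in (0:ℝ)..1, u0 x * (deriv (fun y => r y t) x) ^ 2)
        (Set.Ici 0) t ∧
      (-2 * ∫ x in (0:ℝ)..1, u0 x * (deriv (fun y => r y t) x) ^ 2) ≤ 0) ∧
    AntitoneOn (fun t => ∫ x in (0:ℝ)..1, u0 x * (r x t) ^ 2) (Set.Ici 0) := by
  classical
  set dt : ℝ → ℝ → ℝ := fun x t => derivWithin (r x) (Set.Ici 0) t with hdtdef
  -- joint continuity of the (extended-in-time) time derivative
  have cdte : Continuous fun p : ℝ × ℝ => dt p.1 (max p.2 0) := by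
    have h1 : Continuous fun p : ℝ × ℝ => ((p.1, max p.2 0) : ℝ × ℝ) :=
      continuous_fst.prodMk (continuous_snd.max continuous_const)
    exact hdt_cont.comp_continuous h1 (fun p => by simp only [Set.mem_setOf_eq]; exact le_max_right _ _)
  have cdt_slice : ∀ t, 0 ≤ t → Continuous fun x => dt x t := by
    intro t ht
    have h := cdte.comp (continuous_id.prodMk (continuous_const : Continuous fun _ : ℝ => t))
    have he : (fun x : ℝ => dt x (max t 0)) = fun x => dt x t := by rw [max_eq_left ht]
    rw [← he]
    exact h
  have hr_hdw : ∀ x t, 0 ≤ t → HasDerivWithinAt (r x) (dt x t) (Set.Ici 0) t := by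
    intro x t ht
    exact (((hrt x).differentiableOn one_ne_zero) t ht).hasDerivWithinAt
  have hr_hd : ∀ x t, 0 < t → HasDerivAt (r x) (dt x t) t := fun x t ht =>
    (hr_hdw x t ht.le).hasDerivAt (Ici_mem_nhds ht)
  -- extension of r to all times
  set re : ℝ → ℝ → ℝ := fun x t => r x 0 + ∫ s in (0:ℝ)..t, dt x (max s 0) with hredef
  have cre : Continuous fun p : ℝ × ℝ => re p.1 p.2 := by
    apply Continuous.add
    · exact (hrx 0 le_rfl).continuous.comp continuous_fst
    · have hF : Continuous (Function.uncurry fun (p : ℝ × ℝ) (s : ℝ) => dt p.1 (max s 0)) := by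
        have h2 : Continuous fun q : (ℝ × ℝ) × ℝ => ((q.1.1, q.2) : ℝ × ℝ) :=
          (continuous_fst.comp continuous_fst).prodMk continuous_snd
        exact cdte.comp h2
      exact intervalIntegral.continuous_parametric_intervalIntegral_of_continuous hF continuous_snd
  have cre_slice : ∀ τ : ℝ, Continuous fun x => re x τ := fun τ =>
    cre.comp (continuous_id.prodMk continuous_const)
  have cdte_slice : ∀ x : ℝ, Continuous fun s => dt x (max s 0) := fun x =>
    cdte.comp (continuous_const.prodMk continuous_id)
  have hre_deriv : ∀ x t, HasDerivAt (re x) (dt x (max t 0)) t := by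
    intro x t
    exact (((cdte_slice x).integral_hasStrictDerivAt 0 t).hasDerivAt).const_add (r x 0)
  have hre_eq : ∀ x t, 0 ≤ t → re x t = r x t := by
    intro x t ht
    have h1 : (∫ s in (0:ℝ)..t, dt x (max s 0)) = ∫ s in (0:ℝ)..t, dt x s := by
      apply intervalIntegral.integral_congr
      intro s hs
      rw [Set.uIcc_of_le ht] at hs
      simp [max_eq_left hs.1]
    have h2 : (∫ s in (0:ℝ)..t, dt x s) = r x t - r x 0 := by
      apply intervalIntegral.integral_eq_sub_of_hasDeriv_right_of_le ht
      · exact ((hrt x).continuousOn).mono Set.Icc_subset_Ici_self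
      · intro s hs
        exact (hr_hd x s hs.1).hasDerivWithinAt
      · apply ContinuousOn.intervalIntegrable
        have hmap : Set.MapsTo (fun s : ℝ => ((x, s) : ℝ × ℝ)) (Set.uIcc 0 t)
            {p : ℝ × ℝ | 0 ≤ p.2} := by
          intro s hs
          rw [Set.uIcc_of_le ht] at hs
          exact hs.1
        exact hdt_cont.comp ((continuous_const.prodMk continuous_id).continuousOn) hmap
    show r x 0 + (∫ s in (0:ℝ)..t, dt x (max s 0)) = r x t
    rw [h1, h2]; ring
  -- differentiating under the integral sign
  have hd0 : ∀ t, 0 ≤ t → HasDerivAt (fun τ => ∫ x in (0:ℝ)..1, u0 x * (re x τ) ^ 2)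
      (∫ x in (0:ℝ)..1, 2 * u0 x * re x t * dt x (max t 0)) t := by
    intro t ht
    have cF' : Continuous fun p : ℝ × ℝ => 2 * u0 p.1 * re p.1 p.2 * dt p.1 (max p.2 0) :=
      ((continuous_const.mul (hu0c.comp continuous_fst)).mul cre).mul cdte
    obtain ⟨C, hC⟩ : ∃ C, ∀ q ∈ Set.Icc (0:ℝ) 1 ×ˢ Set.Icc (t - 1) (t + 1),
        ‖2 * u0 q.1 * re q.1 q.2 * dt q.1 (max q.2 0)‖ ≤ C :=
      (isCompact_Icc.prod isCompact_Icc).exists_bound_of_continuousOn cF'.continuousOn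
    have hmeas : ∀ᶠ τ in nhds t, AEStronglyMeasurable (fun x => u0 x * (re x τ) ^ 2)
        (volume.restrict (Set.uIoc (0:ℝ) 1)) :=
      Filter.Eventually.of_forall fun τ =>
        (hu0c.mul ((cre_slice τ).pow 2)).aestronglyMeasurable
    have hint : IntervalIntegrable (fun x => u0 x * (re x t) ^ 2) volume 0 1 :=
      (hu0c.mul ((cre_slice t).pow 2)).intervalIntegrable 0 1
    have cF't : Continuous fun x => 2 * u0 x * re x t * dt x (max t 0) :=
      cF'.comp (continuous_id.prodMk continuous_const)
    have hbound : ∀ᵐ x ∂volume, x ∈ Set.uIoc (0:ℝ) 1 → ∀ τ ∈ Metric.ball t 1,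
        ‖2 * u0 x * re x τ * dt x (max τ 0)‖ ≤ C := by
      refine Filter.Eventually.of_forall fun x hx τ hτ => hC (x, τ) ?_
      rw [Metric.mem_ball, Real.dist_eq, abs_lt] at hτ
      constructor
      · rw [Set.uIoc_of_le (by norm_num : (0:ℝ) ≤ 1)] at hx
        exact ⟨hx.1.le, hx.2⟩
      · exact ⟨by linarith [hτ.1], by linarith [hτ.2]⟩
    have hdiff : ∀ᵐ x ∂volume, x ∈ Set.uIoc (0:ℝ) 1 → ∀ τ ∈ Metric.ball t 1,
        HasDerivAt (fun τ => u0 x * (re x τ) ^ 2) (2 * u0 x * re x τ * dt x (max τ 0)) τ := by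
      refine Filter.Eventually.of_forall fun x _ τ _ => ?_
      have h2 := ((hre_deriv x τ).pow 2).const_mul (u0 x)
      refine HasDerivAt.congr_deriv h2 ?_
      push_cast
      ring
    exact (intervalIntegral.hasDerivAt_integral_of_dominated_loc_of_deriv_le (Metric.ball_mem_nhds t one_pos) hmeas hint
      cF't.aestronglyMeasurable hbound (intervalIntegrable_const) hdiff).2
  -- identification of the derivative via integration by parts
  have key : ∀ t, 0 ≤ t → (∫ x in (0:ℝ)..1, 2 * u0 x * re x t * dt x (max t 0))
      = -2 * ∫ x in (0:ℝ)..1, u0 x * (deriv (fun y => r y t) x) ^ 2 := by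
    intro t ht
    have hmax : max t 0 = t := max_eq_left ht
    set dX : ℝ → ℝ := deriv (fun y => r y t) with hdxdef
    have cdx : Continuous dX := by
      have h1 : Continuous fun x : ℝ => ((x, t) : ℝ × ℝ) :=
        continuous_id.prodMk continuous_const
      exact hdx_cont.comp_continuous h1 (fun x => ht)
    have cdtt : Continuous fun x => dt x t := cdt_slice t ht
    have crt : Continuous fun y => r y t := (hrx t ht).continuous
    have hdiffx : Differentiable ℝ (fun y => r y t) := (hrx t ht).differentiable (by norm_num)
    have hu : ∀ y : ℝ, HasDerivAt (fun z => r z t) (dX y) y := fun y => (hdiffx y).hasDerivAt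
    set w : ℝ → ℝ := fun y => -J0 * r y t + u0 y * dX y with hwdef
    have ibp : ∫ x in (0:ℝ)..1, r x t * (u0 x * dt x t)
        = r 1 t * w 1 - r 0 t * w 0 - ∫ x in (0:ℝ)..1, dX x * w x := by
      apply intervalIntegral.integral_mul_deriv_eq_deriv_mul
      · exact fun x _ => hu x
      · exact fun x _ => hpde x t ht
      · exact cdx.intervalIntegrable 0 1
      · exact (hu0c.mul cdtt).intervalIntegrable 0 1
    have hr10 : r 1 t = r 0 t := by simpa using hper 0 t ht
    have hu10 : u0 1 = u0 0 := by simpa using hu0per 0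
    have hdx10 : dX 1 = dX 0 := by
      have hfun : (fun y => r (y + 1) t) = fun y => r y t := funext fun y => hper y t ht
      have h0 : HasDerivAt (fun z => r z t) (dX 1) ((0:ℝ) + 1) := by
        rw [zero_add]; exact hu 1
      have h1 : HasDerivAt (fun y => r (y + 1) t) (dX 1) 0 := h0.comp_add_const 0 1
      rw [hfun] at h1
      exact h1.unique (hu 0)
    have hw10 : w 1 = w 0 := by
      show -J0 * r 1 t + u0 1 * dX 1 = -J0 * r 0 t + u0 0 * dX 0
      rw [hr10, hu10, hdx10]
    have hzero : ∫ x in (0:ℝ)..1, r x t * dX x = 0 := by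
      have hsq : ∀ x ∈ Set.uIcc (0:ℝ) 1,
          HasDerivAt (fun y => r y t ^ 2 / 2) (r x t * dX x) x := by
        intro x _
        have h3 := ((hu x).pow 2).div_const 2
        refine HasDerivAt.congr_deriv h3 ?_
        push_cast
        ring
      have h4 := intervalIntegral.integral_eq_sub_of_hasDerivAt hsq
        ((crt.mul cdx).intervalIntegrable 0 1)
      rw [h4, hr10]; ring
    have hsplit : ∫ x in (0:ℝ)..1, dX x * w x
        = -J0 * (∫ x in (0:ℝ)..1, r x t * dX x) + ∫ x in (0:ℝ)..1, u0 x * dX x ^ 2 := by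
      have h1 : ∀ x : ℝ, dX x * w x = -J0 * (r x t * dX x) + u0 x * dX x ^ 2 := fun x => by
        show dX x * (-J0 * r x t + u0 x * dX x) = _
        ring
      rw [intervalIntegral.integral_congr (g := fun x => -J0 * (r x t * dX x) + u0 x * dX x ^ 2)
        (fun x _ => h1 x)]
      rw [intervalIntegral.integral_add (f := fun x => -J0 * (r x t * dX x)) (g := fun x => u0 x * dX x ^ 2)
        ((continuous_const.mul (crt.mul cdx)).intervalIntegrable 0 1)
        ((hu0c.mul (cdx.pow 2)).intervalIntegrable 0 1),
        intervalIntegral.integral_const_mul]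
    have hLHS : (∫ x in (0:ℝ)..1, 2 * u0 x * re x t * dt x (max t 0))
        = 2 * ∫ x in (0:ℝ)..1, r x t * (u0 x * dt x t) := by
      rw [← intervalIntegral.integral_const_mul]
      apply intervalIntegral.integral_congr
      intro x _
      show 2 * u0 x * re x t * dt x (max t 0) = 2 * (r x t * (u0 x * dt x t))
      rw [hre_eq x t ht, hmax]; ring
    rw [hLHS, ibp, hr10, hw10, hsplit, hzero]
    ring
  -- the one-sided derivative statement
  have hdmain : ∀ t, 0 ≤ t →
      HasDerivWithinAt (fun τ => ∫ x in (0:ℝ)..1, u0 x * (r x τ) ^ 2)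
        (-2 * ∫ x in (0:ℝ)..1, u0 x * (deriv (fun y => r y t) x) ^ 2) (Set.Ici 0) t := by
    intro t ht
    have h1 := (hd0 t ht).hasDerivWithinAt (s := Set.Ici 0)
    rw [key t ht] at h1
    apply h1.congr
    · intro τ hτ
      apply intervalIntegral.integral_congr
      intro x _
      show u0 x * (r x τ) ^ 2 = u0 x * (re x τ) ^ 2
      rw [hre_eq x τ hτ]
    · apply intervalIntegral.integral_congr
      intro x _
      show u0 x * (r x t) ^ 2 = u0 x * (re x t) ^ 2
      rw [hre_eq x t ht]
  have hnonpos : ∀ t, 0 ≤ t →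
      -2 * (∫ x in (0:ℝ)..1, u0 x * (deriv (fun y => r y t) x) ^ 2) ≤ 0 := by
    intro t ht
    have h0 : 0 ≤ ∫ x in (0:ℝ)..1, u0 x * (deriv (fun y => r y t) x) ^ 2 :=
      intervalIntegral.integral_nonneg (by norm_num)
        (fun x _ => mul_nonneg (hu0pos x).le (sq_nonneg _))
    linarith
  refine ⟨fun t ht => ⟨hdmain t ht, hnonpos t ht⟩, ?_⟩
  apply antitoneOn_of_deriv_nonpos (convex_Ici 0)
  · exact fun t ht => (hdmain t ht).continuousWithinAt
  · intro t ht
    rw [interior_Ici] at ht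
    have ht' : (0:ℝ) < t := ht
    exact ((hdmain t ht'.le).hasDerivAt (Ici_mem_nhds ht')).differentiableAt.differentiableWithinAt
  · intro t ht
    rw [interior_Ici] at ht
    have ht' : (0:ℝ) < t := ht
    rw [((hdmain t ht'.le).hasDerivAt (Ici_mem_nhds ht')).deriv]
    exact hnonpos t ht'.le
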